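/- Let n ≥ 1 and k ≥ 1. For every u ∈ 𝔽_{2^n} and c ∈ ℤ/2^kℤ, the map χ_{u,c} : 𝔽_{2^n} × ℤ/2^kℤ → ℂ defined by χ_{u,c}(x,y) = (−1)^{ι(Tr(ux)) + ι(σ(c₀,x))} · ζ^{c·y} · i^{ι(Tr(c₀x))} satisfies χ_{u,c}((x₁,y₁) ⋆ (x₂,y₂)) = χ_{u,c}(x₁,y₁) · χ_{u,c}(x₂,y₂) for all (x₁,y₁), (x₂,y₂) ∈ 𝔽_{2^n} × ℤ/2^kℤ; that is, each χ_{u,c} is a character of the group (𝔽_{2^n} × ℤ/2^kℤ, ⋆). -/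

import Mathlib

noncomputable section

/-- The absolute trace Tr(x) = x + x² + x⁴ + … + x^{2^{n−1}}. -/
def Tr {F : Type} [Field F] (n : ℕ) (x : F) : F :=
  ∑ i ∈ Finset.range n, x ^ (2 ^ i)

/-- σ(c,x) = Σ_{0 ≤ i < j ≤ n−1} (cx)^{2^i} (cx)^{2^j} -/
def sig {F : Type} [Field F] (n : ℕ) (c x : F) : F :=
  ∑ j ∈ Finset.range n, ∑ i ∈ Finset.range j, (c * x) ^ (2 ^ i) * (c * x) ^ (2 ^ j)

/-- ι(e): the integer lift of e ∈ {0,1} ⊆ F. -/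
def iotaN {F : Type} [Field F] [DecidableEq F] (e : F) : ℕ :=
  if e = 1 then 1 else 0

/-- ζ = e^{2πi/2^k}. -/
def zeta (k : ℕ) : ℂ := Complex.exp (2 * Real.pi * Complex.I / 2 ^ k)

/-- c₀ ∈ {0,1} ⊆ F equals 1 if c is odd and 0 if c is even. -/
def czero {F : Type} [Field F] (k : ℕ) (c : ZMod (2 ^ k)) : F :=
  if c.val % 2 = 1 then 1 else 0

/-- The operation ⋆ on 𝔽_{2^n} × ℤ/2^kℤ:
(x₁,y₁) ⋆ (x₂,y₂) = (x₁+x₂, y₁+y₂+2^{k−1}·ι(Tr(x₁x₂))). -/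
def star {F : Type} [Field F] [DecidableEq F] (n k : ℕ)
    (p q : F × ZMod (2 ^ k)) : F × ZMod (2 ^ k) :=
  (p.1 + q.1, p.2 + q.2 +
    2 ^ (k - 1) * (if Tr n (p.1 * q.1) = 1 then 1 else 0))

/-- χ_{u,c}(x,y) = (−1)^{ι(Tr(ux)) + ι(σ(c₀,x))} · ζ^{c·y} · i^{ι(Tr(c₀x))}. -/
def chi {F : Type} [Field F] [DecidableEq F] (n k : ℕ) (u : F) (c : ZMod (2 ^ k))
    (p : F × ZMod (2 ^ k)) : ℂ :=
  (-1 : ℂ) ^ (iotaN (Tr n (u * p.1)) + iotaN (sig n (czero k c) p.1)) *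
    zeta k ^ (c * p.2).val * Complex.I ^ (iotaN (Tr n (czero k c * p.1)))

section Aux
variable {F : Type} [Field F]

lemma Tr_add [CharP F 2] (n : ℕ) (a b : F) : Tr n (a + b) = Tr n a + Tr n b := by
  haveI : ExpChar F 2 := ExpChar.prime Nat.prime_two
  unfold Tr
  rw [← Finset.sum_add_distrib]
  exact Finset.sum_congr rfl fun i _ => add_pow_char_pow ..

lemma Tr_zero (n : ℕ) : Tr n (0 : F) = 0 := by
  simp [Tr, zero_pow (pow_ne_zero _ two_ne_zero)]

lemma sig_zero (n : ℕ) (x : F) : sig n 0 (x : F) = 0 := by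
  simp [sig, zero_pow (pow_ne_zero _ two_ne_zero)]

lemma Tr_mul_self [CharP F 2] (n : ℕ) (hfix : ∀ x : F, x ^ (2:ℕ) ^ n = x) (x : F) :
    Tr n x * Tr n x = Tr n x := by
  haveI : ExpChar F 2 := ExpChar.prime Nat.prime_two
  have h1 : Tr n x * Tr n x = ∑ i ∈ Finset.range n, x ^ (2:ℕ) ^ (i + 1) := by
    rw [← sq, Tr, sum_pow_char]
    exact Finset.sum_congr rfl fun i _ => by rw [← pow_mul, ← pow_succ]
  have h2 := Finset.sum_range_succ' (fun i => x ^ (2:ℕ) ^ i) n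
  have h3 := Finset.sum_range_succ (fun i => x ^ (2:ℕ) ^ i) n
  simp only [Tr] at *
  rw [h1]
  have h4 : ∑ i ∈ Finset.range n, x ^ (2:ℕ) ^ (i+1)
      = ∑ i ∈ Finset.range n, x ^ (2:ℕ) ^ i + x ^ (2:ℕ) ^ n - x ^ (2:ℕ) ^ (0:ℕ) := by
    rw [← h3, h2]; ring
  rw [h4, hfix x]
  simp

lemma mem01 {t : F} (h : t * t = t) : t = 0 ∨ t = 1 := by
  have h2 : t * (t - 1) = 0 := by ring_nf; linear_combination h
  rcases mul_eq_zero.mp h2 with h | h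
  · exact Or.inl h
  · exact Or.inr (sub_eq_zero.mp h)

end Aux

section Aux2
variable {F : Type} [Field F]

lemma tri (n : ℕ) (f g : ℕ → F) :
    ∑ j ∈ Finset.range n, ∑ i ∈ Finset.range j, (f i * g j + f j * g i)
      = (∑ i ∈ Finset.range n, f i) * (∑ j ∈ Finset.range n, g j)
        - ∑ i ∈ Finset.range n, f i * g i := by
  induction n with
  | zero => simp
  | succ m ih =>
    rw [Finset.sum_range_succ (f := fun j => ∑ i ∈ Finset.range j, (f i * g j + f j * g i)),
      Finset.sum_range_succ (f := fun i => f i * g i),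
      Finset.sum_range_succ (f := f), Finset.sum_range_succ (f := g), ih,
      Finset.sum_add_distrib, ← Finset.sum_mul, ← Finset.mul_sum]
    ring

lemma sig_one_add [CharP F 2] (n : ℕ) (x y : F) :
    sig n 1 (x + y) = sig n 1 x + sig n 1 y + Tr n x * Tr n y + Tr n (x * y) := by
  haveI : ExpChar F 2 := ExpChar.prime Nat.prime_two
  simp only [sig, one_mul, Tr]
  have step1 : ∑ j ∈ Finset.range n, ∑ i ∈ Finset.range j, (x+y)^(2:ℕ)^i * (x+y)^(2:ℕ)^j
      = ∑ j ∈ Finset.range n, ∑ i ∈ Finset.range j,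
          (x^(2:ℕ)^i * x^(2:ℕ)^j + y^(2:ℕ)^i * y^(2:ℕ)^j
            + (x^(2:ℕ)^i * y^(2:ℕ)^j + x^(2:ℕ)^j * y^(2:ℕ)^i)) := by
    refine Finset.sum_congr rfl fun j _ => Finset.sum_congr rfl fun i _ => ?_
    rw [add_pow_char_pow, add_pow_char_pow]
    ring
  have split : ∀ u v w : ℕ → ℕ → F,
      ∑ j ∈ Finset.range n, ∑ i ∈ Finset.range j, (u i j + v i j + w i j)
        = (∑ j ∈ Finset.range n, ∑ i ∈ Finset.range j, u i j)
          + (∑ j ∈ Finset.range n, ∑ i ∈ Finset.range j, v i j)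
          + (∑ j ∈ Finset.range n, ∑ i ∈ Finset.range j, w i j) := by
    intro u v w
    simp [Finset.sum_add_distrib]
  rw [step1, split (fun i j => x^(2:ℕ)^i * x^(2:ℕ)^j) (fun i j => y^(2:ℕ)^i * y^(2:ℕ)^j)
    (fun i j => x^(2:ℕ)^i * y^(2:ℕ)^j + x^(2:ℕ)^j * y^(2:ℕ)^i),
    tri n (fun i => x ^ (2:ℕ)^i) (fun j => y ^ (2:ℕ)^j)]
  have hmul : ∑ i ∈ Finset.range n, (x*y)^(2:ℕ)^i
      = ∑ i ∈ Finset.range n, x^(2:ℕ)^i * y^(2:ℕ)^i :=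
    Finset.sum_congr rfl fun i _ => mul_pow ..
  rw [hmul, CharTwo.sub_eq_add]
  ring

lemma sum_sq_char2 [CharP F 2] (s : Finset ℕ) (f : ℕ → F) :
    (∑ i ∈ s, f i) * (∑ i ∈ s, f i) = ∑ i ∈ s, f i * f i := by
  haveI : ExpChar F 2 := ExpChar.prime Nat.prime_two
  have := sum_pow_char (p := 2) s f
  simpa [sq, pow_two] using this

lemma sig_one_mul_self [CharP F 2] (n : ℕ) (hfix : ∀ x : F, x ^ (2:ℕ) ^ n = x) (x : F) :
    sig n 1 x * sig n 1 x = sig n 1 x := by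
  set a : ℕ → F := fun i => x ^ (2:ℕ) ^ i with ha
  set S : ℕ → F := fun j => ∑ i ∈ Finset.range j, a i with hS
  have hsig : sig n 1 x = ∑ j ∈ Finset.range n, S j * a j := by
    simp only [sig, one_mul, hS, ha]
    exact Finset.sum_congr rfl fun j _ => (Finset.sum_mul ..).symm
  have ha2 : ∀ i, a i * a i = a (i + 1) := fun i => by
    simp only [ha]; rw [← pow_add, ← two_mul, ← pow_succ']
  have hSsq : ∀ j, S j * S j = S (j + 1) - a 0 := by
    intro j
    rw [hS, sum_sq_char2]
    have h2 := Finset.sum_range_succ' a j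
    have : ∑ i ∈ Finset.range j, a i * a i = ∑ i ∈ Finset.range j, a (i + 1) :=
      Finset.sum_congr rfl fun i _ => ha2 i
    rw [this]
    simp only [hS]
    rw [h2]; ring
  have han : a n = a 0 := by simp only [ha]; rw [hfix]; norm_num
  calc sig n 1 x * sig n 1 x
      = ∑ j ∈ Finset.range n, (S j * a j) * (S j * a j) := by rw [hsig, sum_sq_char2]
    _ = ∑ j ∈ Finset.range n, (S (j+1) - a 0) * a (j+1) := by
        refine Finset.sum_congr rfl fun j _ => ?_
        rw [← hSsq j, ← ha2 j]; ring
    _ = ∑ j ∈ Finset.range (n+1), (S j - a 0) * a j - (S 0 - a 0) * a 0 := by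
        rw [Finset.sum_range_succ' (fun j => (S j - a 0) * a j) n]; ring
    _ = (∑ j ∈ Finset.range n, (S j - a 0) * a j + (S n - a 0) * a n) - (S 0 - a 0) * a 0 := by
        rw [Finset.sum_range_succ]
    _ = sig n 1 x := by
        have hsplit : ∑ j ∈ Finset.range n, (S j - a 0) * a j
            = ∑ j ∈ Finset.range n, S j * a j - ∑ j ∈ Finset.range n, a 0 * a j := by
          rw [← Finset.sum_sub_distrib]
          exact Finset.sum_congr rfl fun j _ => by ring
        have hm : ∑ j ∈ Finset.range n, a 0 * a j = a 0 * S n := by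
          rw [hS]; exact (Finset.mul_sum ..).symm
        rw [hsplit, hm, han, hsig]
        simp only [hS, Finset.range_zero, Finset.sum_empty]
        ring

end Aux2

section CAux

lemma zeta_pow_full (k : ℕ) : zeta k ^ (2:ℕ) ^ k = 1 := by
  unfold zeta
  rw [← Complex.exp_nat_mul]
  have h : (2:ℂ) ^ k * (2 * Real.pi * Complex.I / 2 ^ k) = 2 * Real.pi * Complex.I := by
    have h2 : ((2:ℂ)) ^ k ≠ 0 := pow_ne_zero _ two_ne_zero
    field_simp
  push_cast
  rw [h, Complex.exp_two_pi_mul_I]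

lemma zeta_pow_mod (k m : ℕ) : zeta k ^ m = zeta k ^ (m % 2 ^ k) := by
  conv_lhs => rw [← Nat.mod_add_div m (2 ^ k)]
  rw [pow_add, pow_mul, zeta_pow_full, one_pow, mul_one]

lemma zeta_val_add (k : ℕ) (z w : ZMod (2 ^ k)) :
    zeta k ^ (z + w).val = zeta k ^ z.val * zeta k ^ w.val := by
  haveI : NeZero ((2:ℕ) ^ k) := ⟨pow_ne_zero _ two_ne_zero⟩
  rw [ZMod.val_add, ← zeta_pow_mod, pow_add]

lemma zeta_pow_half (k : ℕ) (hk : 1 ≤ k) : zeta k ^ (2:ℕ) ^ (k - 1) = -1 := by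
  unfold zeta
  rw [← Complex.exp_nat_mul]
  have h : (2:ℂ) ^ (k-1) * (2 * Real.pi * Complex.I / 2 ^ k) = Real.pi * Complex.I := by
    have hk2 : (2:ℂ) ^ k = 2 ^ (k-1) * 2 := by
      rw [← pow_succ, Nat.sub_add_cancel hk]
    have h2 : ((2:ℂ)) ^ (k-1) ≠ 0 := pow_ne_zero _ two_ne_zero
    rw [hk2]
    field_simp
  push_cast
  rw [h, Complex.exp_pi_mul_I]

lemma two_pow_zero (k : ℕ) : ((2 : ZMod (2 ^ k)) ^ k) = 0 := by
  have h := ZMod.natCast_self (2 ^ k)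
  push_cast at h
  exact h

lemma pow_sub_one_mul_two (k : ℕ) (hk : 1 ≤ k) :
    (2 : ZMod (2 ^ k)) ^ (k - 1) * 2 = 2 ^ k := by
  rw [← pow_succ, Nat.sub_add_cancel hk]

lemma odd_mul_half (k : ℕ) (hk : 1 ≤ k) (c : ZMod (2 ^ k)) (hc : c.val % 2 = 1) :
    c * 2 ^ (k - 1) = 2 ^ (k - 1) := by
  haveI : NeZero ((2:ℕ) ^ k) := ⟨pow_ne_zero _ two_ne_zero⟩
  have hcv : ((c.val : ℕ) : ZMod (2 ^ k)) = c := ZMod.natCast_rightInverse c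
  have hval : c.val = 2 * (c.val / 2) + 1 := by omega
  have hc'' : ((2 * (c.val / 2) + 1 : ℕ) : ZMod (2 ^ k)) = c := by rw [← hval]; exact hcv
  push_cast at hc''
  rw [← hc'']
  linear_combination ((c.val / 2 : ℕ) : ZMod (2 ^ k)) * pow_sub_one_mul_two k hk
    + ((c.val / 2 : ℕ) : ZMod (2 ^ k)) * two_pow_zero k

lemma even_mul_half (k : ℕ) (hk : 1 ≤ k) (c : ZMod (2 ^ k)) (hc : ¬ c.val % 2 = 1) :
    c * 2 ^ (k - 1) = 0 := by
  haveI : NeZero ((2:ℕ) ^ k) := ⟨pow_ne_zero _ two_ne_zero⟩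
  have hcv : ((c.val : ℕ) : ZMod (2 ^ k)) = c := ZMod.natCast_rightInverse c
  have hval : c.val = 2 * (c.val / 2) := by omega
  have hc'' : ((2 * (c.val / 2) : ℕ) : ZMod (2 ^ k)) = c := by rw [← hval]; exact hcv
  push_cast at hc''
  rw [← hc'']
  linear_combination ((c.val / 2 : ℕ) : ZMod (2 ^ k)) * pow_sub_one_mul_two k hk
    + ((c.val / 2 : ℕ) : ZMod (2 ^ k)) * two_pow_zero k

lemma val_half (k : ℕ) (hk : 1 ≤ k) :
    ((2 : ZMod (2 ^ k)) ^ (k - 1)).val = 2 ^ (k - 1) := by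
  have h : ((2 : ZMod (2 ^ k)) ^ (k - 1)) = (((2:ℕ) ^ (k-1) : ℕ) : ZMod (2 ^ k)) := by
    push_cast
    ring
  rw [h, ZMod.val_cast_of_lt (Nat.pow_lt_pow_right one_lt_two (by omega))]

end CAux

section Bash
variable {F : Type} [Field F] [DecidableEq F]

lemma neg_one_pow_add [CharP F 2] {t₁ t₂ : F} (h1 : t₁ = 0 ∨ t₁ = 1) (h2 : t₂ = 0 ∨ t₂ = 1) :
    (-1:ℂ) ^ (iotaN (t₁ + t₂)) = (-1:ℂ) ^ (iotaN t₁) * (-1:ℂ) ^ (iotaN t₂) := by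
  have h11 : (1:F) + 1 = 0 := CharTwo.add_self_eq_zero 1
  rcases h1 with rfl | rfl <;> rcases h2 with rfl | rfl <;>
    simp [iotaN, h11]

lemma key2 [CharP F 2] {σ₁ σ₂ s₁ s₂ e : F}
    (h1 : σ₁ = 0 ∨ σ₁ = 1) (h2 : σ₂ = 0 ∨ σ₂ = 1) (h3 : s₁ = 0 ∨ s₁ = 1)
    (h4 : s₂ = 0 ∨ s₂ = 1) (h5 : e = 0 ∨ e = 1) :
    (-1:ℂ) ^ (iotaN (σ₁ + σ₂ + s₁ * s₂ + e)) * (-1:ℂ) ^ (iotaN e)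
        * Complex.I ^ (iotaN (s₁ + s₂))
      = ((-1:ℂ) ^ (iotaN σ₁) * Complex.I ^ (iotaN s₁))
        * ((-1:ℂ) ^ (iotaN σ₂) * Complex.I ^ (iotaN s₂)) := by
  have h11 : (1:F) + 1 = 0 := CharTwo.add_self_eq_zero 1
  rcases h1 with rfl | rfl <;> rcases h2 with rfl | rfl <;> rcases h3 with rfl | rfl <;>
    rcases h4 with rfl | rfl <;> rcases h5 with rfl | rfl <;>
    simp [iotaN, h11, Complex.I_mul_I]

end Bash

/-- Each χ_{u,c} is a character of the group (𝔽_{2^n} × ℤ/2^kℤ, ⋆). -/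
theorem stmt3 {F : Type} [Field F] [Fintype F] [DecidableEq F] (n k : ℕ)
    (hn : 1 ≤ n) (hk : 1 ≤ k) (hF : Fintype.card F = 2 ^ n)
    (u : F) (c : ZMod (2 ^ k)) :
    ∀ p q : F × ZMod (2 ^ k),
      chi n k u c (star n k p q) = chi n k u c p * chi n k u c q := by
  haveI hNZ : NeZero ((2:ℕ) ^ k) := ⟨pow_ne_zero _ two_ne_zero⟩
  haveI hchar : CharP F 2 := by
    obtain ⟨p, hcp⟩ := CharP.exists F
    haveI := hcp
    have hp : p.Prime := CharP.char_is_prime F p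
    obtain ⟨m, hp', hm⟩ := FiniteField.card F p
    have hdvd : p ∣ 2 ^ n := by
      rw [← hF, hm]
      exact dvd_pow_self p m.pos.ne'
    have hp2 : p = 2 :=
      (Nat.prime_dvd_prime_iff_eq hp Nat.prime_two).mp (hp.dvd_of_dvd_pow hdvd)
    rwa [hp2] at hcp
  have hfix : ∀ x : F, x ^ (2:ℕ) ^ n = x := fun x => by
    rw [← hF]; exact FiniteField.pow_card x
  rintro ⟨x₁, y₁⟩ ⟨x₂, y₂⟩
  simp only [chi, _root_.star]
  by_cases hc : c.val % 2 = 1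
  · -- c odd
    have hc0 : czero (F := F) k c = 1 := by simp [czero, hc]
    rw [hc0]
    simp only [one_mul]
    have hE : zeta k ^ ((c * (2 ^ (k-1) *
        (if Tr n (x₁ * x₂) = (1:F) then (1 : ZMod (2 ^ k)) else 0))).val)
        = (-1:ℂ) ^ (iotaN (Tr n (x₁ * x₂))) := by
      rcases mem01 (Tr_mul_self n hfix (x₁ * x₂)) with h0 | h1
      · rw [if_neg (by rw [h0]; exact zero_ne_one), mul_zero, mul_zero, ZMod.val_zero,
          pow_zero, h0]
        simp [iotaN]
      · rw [if_pos h1, mul_one, odd_mul_half k hk c hc, val_half k hk, zeta_pow_half k hk, h1]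
        simp [iotaN]
    rw [mul_add c (y₁ + y₂), mul_add c y₁ y₂, zeta_val_add, zeta_val_add, hE,
      mul_add u x₁ x₂, Tr_add, Tr_add n x₁ x₂, sig_one_add,
      pow_add, pow_add, pow_add,
      neg_one_pow_add (mem01 (Tr_mul_self n hfix (u * x₁)))
        (mem01 (Tr_mul_self n hfix (u * x₂)))]
    have hk2 := key2 (F := F)
      (mem01 (sig_one_mul_self n hfix x₁)) (mem01 (sig_one_mul_self n hfix x₂))
      (mem01 (Tr_mul_self n hfix x₁)) (mem01 (Tr_mul_self n hfix x₂))
      (mem01 (Tr_mul_self n hfix (x₁ * x₂)))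
    linear_combination ((-1:ℂ) ^ (iotaN (Tr n (u * x₁))) * (-1:ℂ) ^ (iotaN (Tr n (u * x₂)))
      * zeta k ^ (c * y₁).val * zeta k ^ (c * y₂).val) * hk2
  · -- c even
    have hc0 : czero (F := F) k c = 0 := by simp [czero, hc]
    rw [hc0]
    simp only [zero_mul, sig_zero, Tr_zero]
    have hio : iotaN (0 : F) = 0 := by simp [iotaN]
    have hE : zeta k ^ ((c * (2 ^ (k-1) *
        (if Tr n (x₁ * x₂) = (1:F) then (1 : ZMod (2 ^ k)) else 0))).val) = 1 := by
      rw [← mul_assoc, even_mul_half k hk c hc, zero_mul, ZMod.val_zero, pow_zero]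
    rw [mul_add c (y₁ + y₂), mul_add c y₁ y₂, zeta_val_add, zeta_val_add, hE,
      mul_add u x₁ x₂, Tr_add, hio]
    simp only [add_zero, pow_zero]
    rw [neg_one_pow_add (mem01 (Tr_mul_self n hfix (u * x₁)))
        (mem01 (Tr_mul_self n hfix (u * x₂)))]
    ring
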